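/- Let L be the Laplacian matrix of a connected weighted graph on a finite vertex set V, and let X be a diagonal matrix (indexed by V) with nonnegative diagonal entries, at least one of which is strictly positive. Then L + X is positive definite, and every entry of the inverse matrix (L + X)^{-1} is strictly positive. -/

import Mathlib

open Matrix

/-- The simple graph whose adjacency relation is `i ≠ j ∧ W i j > 0`. -/
def weightedAdjGraph {V : Type*} (W : V → V → ℝ) (hsymm : ∀ i j, W i j = W j i) :
    SimpleGraph V where
  Adj i j := i ≠ j ∧ 0 < W i j
  symm := by
    constructor
    intro i j h
    exact ⟨h.1.symm, by rw [← hsymm i j]; exact h.2⟩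
  loopless := by constructor; intro i h; exact h.1 rfl

/-- The Laplacian matrix of a weighted graph: `L i i = ∑ j, W i j` and
`L i j = -W i j` for `i ≠ j`. -/
def laplacian {V : Type*} [Fintype V] [DecidableEq V] (W : V → V → ℝ) : Matrix V V ℝ :=
  Matrix.of fun i j => if i = j then ∑ k, W i k else -W i j

lemma walk_prop {V : Type*} {G : SimpleGraph V} (P : V → Prop)
    (h : ∀ a b, G.Adj a b → P a → P b) {a b : V} (hr : G.Reachable a b) (ha : P a) : P b := by
  obtain ⟨p⟩ := hr
  induction p with
  | nil => exact ha
  | cons h' p ih => exact ih (h _ _ h' ha)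

lemma key_row {V : Type*} [Fintype V] [DecidableEq V]
    (W : V → V → ℝ) (hdiag : ∀ i, W i i = 0) (x v : V → ℝ) (i : V) :
    ∑ k, (laplacian W + Matrix.diagonal x) i k * v k
      = x i * v i + ∑ k, W i k * (v i - v k) := by
  have h : ∀ k, (laplacian W + Matrix.diagonal x) i k * v k
      = W i k * (v i - v k) + ((if i = k then ((∑ j, W i j) + x i) * v i else 0) - W i k * v i) := by
    intro k
    simp only [laplacian, Matrix.add_apply, Matrix.of_apply, Matrix.diagonal_apply]
    by_cases hk : i = k
    · subst hk; simp [hdiag i]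
    · simp [hk, Ne.symm hk]; ring
  rw [Finset.sum_congr rfl fun k _ => h k]
  rw [Finset.sum_add_distrib, Finset.sum_sub_distrib, Finset.sum_ite_eq, ← Finset.sum_mul]
  simp; ring

lemma quad_form {V : Type*} [Fintype V] [DecidableEq V]
    (W : V → V → ℝ) (hsymm : ∀ i j, W i j = W j i) (hdiag : ∀ i, W i i = 0)
    (x v : V → ℝ) :
    v ⬝ᵥ (laplacian W + Matrix.diagonal x) *ᵥ v
      = ∑ i, (x i * v i ^ 2 + (1/2) * ∑ k, W i k * (v i - v k) ^ 2) := by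
  have hswap : ∑ i, ∑ k, W i k * (v k * (v i - v k))
      = ∑ i, ∑ k, -(W i k * (v i * (v i - v k))) := by
    rw [Finset.sum_comm]
    refine Finset.sum_congr rfl fun i _ => Finset.sum_congr rfl fun k _ => ?_
    rw [hsymm k i]; ring
  have hident : ∑ i, ∑ k, W i k * (v i - v k) ^ 2
      = 2 * ∑ i, ∑ k, W i k * (v i * (v i - v k)) := by
    have : ∀ i k, W i k * (v i - v k) ^ 2
        = W i k * (v i * (v i - v k)) - W i k * (v k * (v i - v k)) := by
      intro i k; ring
    simp only [this, Finset.sum_sub_distrib, hswap, Finset.sum_neg_distrib]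
    ring
  have hdot : v ⬝ᵥ (laplacian W + Matrix.diagonal x) *ᵥ v
      = ∑ i, v i * ∑ k, (laplacian W + Matrix.diagonal x) i k * v k := by
    simp [dotProduct, mulVec]
  rw [hdot, Finset.sum_congr rfl fun i _ => by rw [key_row W hdiag x v i]]
  have : ∀ i, v i * (x i * v i + ∑ k, W i k * (v i - v k))
      = x i * v i ^ 2 + ∑ k, W i k * (v i * (v i - v k)) := by
    intro i
    have h2 : v i * ∑ k, W i k * (v i - v k) = ∑ k, W i k * (v i * (v i - v k)) := by
      rw [Finset.mul_sum]; exact Finset.sum_congr rfl fun k _ => by ring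
    rw [mul_add, h2]; ring
  rw [Finset.sum_congr rfl fun i _ => this i, Finset.sum_add_distrib, Finset.sum_add_distrib]
  congr 1
  rw [← Finset.mul_sum, hident]
  ring

theorem laplacian_add_diagonal_posDef_and_inv_pos {V : Type*} [Fintype V] [DecidableEq V]
    (W : V → V → ℝ) (hsymm : ∀ i j, W i j = W j i)
    (hdiag : ∀ i, W i i = 0) (hnonneg : ∀ i j, 0 ≤ W i j)
    (hconn : (weightedAdjGraph W hsymm).Connected)
    (x : V → ℝ) (hx : ∀ i, 0 ≤ x i) (hx0 : ∃ i, 0 < x i) :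
    (laplacian W + Matrix.diagonal x).PosDef ∧
      ∀ i j, 0 < (laplacian W + Matrix.diagonal x)⁻¹ i j := by
  set M := laplacian W + Matrix.diagonal x with hM
  -- Hermitian
  have hHerm : M.IsHermitian := by
    ext i j
    simp only [hM, conjTranspose_apply, Matrix.add_apply, laplacian, Matrix.of_apply,
      Matrix.diagonal_apply, star_trivial]
    by_cases h : i = j
    · subst h; simp
    · simp [h, Ne.symm h, hsymm j i]
  -- positive definiteness
  have hPD : M.PosDef := by
    refine ⟨hHerm, fun v hv => ?_⟩
    have hq := quad_form W hsymm hdiag x v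
    have hterm : ∀ i ∈ Finset.univ,
        0 ≤ x i * v i ^ 2 + (1/2) * ∑ k, W i k * (v i - v k) ^ 2 := by
      intro i _
      have h1 : 0 ≤ x i * v i ^ 2 := mul_nonneg (hx i) (sq_nonneg _)
      have h2 : 0 ≤ ∑ k, W i k * (v i - v k) ^ 2 :=
        Finset.sum_nonneg fun k _ => mul_nonneg (hnonneg i k) (sq_nonneg _)
      positivity
    have hnn : 0 ≤ v ⬝ᵥ M *ᵥ v := hq ▸ Finset.sum_nonneg hterm
    have hne : v ⬝ᵥ M *ᵥ v ≠ 0 := by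
      intro h0
      have hz := (Finset.sum_eq_zero_iff_of_nonneg hterm).1 (by rw [← hq, h0])
      have hzero : ∀ i, x i * v i ^ 2 = 0 ∧ ∀ k, W i k * (v i - v k) ^ 2 = 0 := by
        intro i
        have hi := hz i (Finset.mem_univ i)
        have h1 : 0 ≤ x i * v i ^ 2 := mul_nonneg (hx i) (sq_nonneg _)
        have h2 : 0 ≤ ∑ k, W i k * (v i - v k) ^ 2 :=
          Finset.sum_nonneg fun k _ => mul_nonneg (hnonneg i k) (sq_nonneg _)
        have hx0' : x i * v i ^ 2 = 0 := by nlinarith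
        have hs0 : ∑ k, W i k * (v i - v k) ^ 2 = 0 := by nlinarith
        exact ⟨hx0', fun k =>
          (Finset.sum_eq_zero_iff_of_nonneg
            (fun k _ => mul_nonneg (hnonneg i k) (sq_nonneg _))).1 hs0 k (Finset.mem_univ k)⟩
      obtain ⟨i0, hi0⟩ := hx0
      have hvi0 : v i0 = 0 := by
        have := (hzero i0).1
        have : v i0 ^ 2 = 0 := by
          rcases mul_eq_zero.1 this with h | h
          · exact absurd h hi0.ne'
          · exact h
        exact pow_eq_zero_iff two_ne_zero |>.mp this
      apply hv
      ext i
      have : v i = 0 := by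
        refine walk_prop (fun a => v a = 0) ?_ (hconn.preconnected i0 i) hvi0
        intro a b hab ha
        have := (hzero a).2 b
        have hW : 0 < W a b := (show a ≠ b ∧ 0 < W a b from hab).2
        have : (v a - v b) ^ 2 = 0 := by
          rcases mul_eq_zero.1 this with h | h
          · exact absurd h hW.ne'
          · exact h
        have : v a - v b = 0 := by nlinarith
        linarith
      exact this
    have : 0 < v ⬝ᵥ M *ᵥ v := lt_of_le_of_ne hnn (Ne.symm hne)
    simpa [dotProduct, mulVec, Finsupp.sum_fintype, Finset.mul_sum, mul_assoc] using this
  refine ⟨hPD, ?_⟩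
  -- inverse positivity
  have hdet : IsUnit M.det := isUnit_iff_ne_zero.2 hPD.det_pos.ne'
  have hMul : M * M⁻¹ = 1 := Matrix.mul_nonsing_inv M hdet
  have main : ∀ j i, 0 < M⁻¹ i j := by
    intro j
    set y : V → ℝ := fun k => M⁻¹ k j with hy
    have heq : ∀ i, x i * y i + ∑ k, W i k * (y i - y k) = if i = j then 1 else 0 := by
      intro i
      have h1 := congrFun (congrFun hMul i) j
      rw [Matrix.mul_apply] at h1
      rw [← key_row W hdiag x y i]
      rw [h1]
      simp [Matrix.one_apply]
    have : Nonempty V := hconn.nonempty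
    obtain ⟨i0, -, hmin⟩ := Finset.exists_min_image Finset.univ y Finset.univ_nonempty
    have hmin' : ∀ i, y i0 ≤ y i := fun i => hmin i (Finset.mem_univ i)
    intro i
    by_contra hcon
    push_neg at hcon
    have hm : y i0 ≤ 0 := le_trans (hmin' i) hcon
    have claim : ∀ a, y a = y i0 → a ≠ j ∧ ∀ k, 0 < W a k → y k = y i0 := by
      intro a ha
      have h1 := heq a
      have hsum_nonpos : ∀ k ∈ Finset.univ, W a k * (y a - y k) ≤ 0 := by
        intro k _
        exact mul_nonpos_of_nonneg_of_nonpos (hnonneg a k) (by rw [ha]; linarith [hmin' k])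
      have hx_nonpos : x a * y a ≤ 0 :=
        mul_nonpos_of_nonneg_of_nonpos (hx a) (by rw [ha]; exact hm)
      have hS : ∑ k, W a k * (y a - y k) ≤ 0 := Finset.sum_nonpos hsum_nonpos
      have haj : a ≠ j := by
        intro h
        rw [if_pos h] at h1
        linarith
      rw [if_neg haj] at h1
      have hsum0 : ∑ k, W a k * (y a - y k) = 0 := le_antisymm hS (by linarith)
      have each := (Finset.sum_eq_zero_iff_of_nonpos hsum_nonpos).1 hsum0
      refine ⟨haj, fun k hk => ?_⟩
      have hk0 := each k (Finset.mem_univ k)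
      have : y a - y k = 0 := by
        rcases mul_eq_zero.1 hk0 with h | h
        · exact absurd h hk.ne'
        · exact h
      linarith [ha]
    have hyj : y j = y i0 :=
      walk_prop (fun a => y a = y i0)
        (fun a b hab h => (claim a h).2 b (show a ≠ b ∧ 0 < W a b from hab).2) (hconn.preconnected i0 j) rfl
    exact (claim j hyj).1 rfl
  exact fun i j => main j i
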